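/- arXiv:1809.09539 — 3 statements merged into one kernel-verified Lean document; each statement's English description precedes it below -/
import Mathlib

section
/- Let (K, v) be a rank one valued field and let E = {s_n} be a pseudo-convergent sequence that is of transcendental type, or of algebraic type with nonzero breadth ideal. Then the map w_E(φ) = lim_{n→∞} v(φ(s_n)) is a well-defined rank one valuation on K(X) extending v, and the valuation ring W_E of w_E contains V_E = {φ : φ(s_n) ∈ V for almost all n}. -/
open Filter

namespace Stmt13

variable {F : Type*} [Field F] (u : AddValuation F (WithTop ℝ)) (t : ℕ → F)

section Abstract

lemma gamma_mono (hlt : ∀ n, u (t (n + 1) - t n) < u (t (n + 2) - t (n + 1))) :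
    StrictMono (fun n => u (t (n + 1) - t n)) :=
  strictMono_nat_of_lt_succ hlt

lemma gamma_ne_top (hlt : ∀ n, u (t (n + 1) - t n) < u (t (n + 2) - t (n + 1))) (n : ℕ) :
    u (t (n + 1) - t n) ≠ ⊤ :=
  ((hlt n).trans_le le_top).ne

lemma diff_val (hlt : ∀ n, u (t (n + 1) - t n) < u (t (n + 2) - t (n + 1))) {n m : ℕ}
    (h : n < m) : u (t m - t n) = u (t (n + 1) - t n) := by
  induction m, h using Nat.le_induction with
  | base => rfl
  | succ m hm ih =>
    have h1 : t (m + 1) - t n = (t (m + 1) - t m) + (t m - t n) := by ring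
    rw [h1, AddValuation.map_add_eq_of_lt_right _ (by
      rw [ih]; exact gamma_mono u t hlt (Nat.lt_of_succ_le hm)), ih]

lemma t_inj (hlt : ∀ n, u (t (n + 1) - t n) < u (t (n + 2) - t (n + 1))) :
    Function.Injective t := by
  intro m n hmn
  by_contra hne
  rcases Ne.lt_or_gt hne with h | h
  · have h1 := diff_val u t hlt h
    have h0 : u (t n - t m) = ⊤ := by rw [hmn, sub_self, AddValuation.map_zero]
    exact gamma_ne_top u t hlt m (h1.symm.trans h0)
  · have h1 := diff_val u t hlt h
    have h0 : u (t m - t n) = ⊤ := by rw [hmn, sub_self, AddValuation.map_zero]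
    exact gamma_ne_top u t hlt n (h1.symm.trans h0)

lemma dichotomy (hlt : ∀ n, u (t (n + 1) - t n) < u (t (n + 2) - t (n + 1))) (a : F) :
    (∃ c : WithTop ℝ, c ≠ ⊤ ∧ ∀ᶠ n in atTop, u (t n - a) = c) ∨
    (∀ n, u (t n - a) = u (t (n + 1) - t n)) := by
  by_cases hex : ∃ n₀, u (t n₀ - a) < u (t (n₀ + 1) - t n₀)
  · obtain ⟨n₀, hn₀⟩ := hex
    refine Or.inl ⟨u (t n₀ - a), (hn₀.trans_le le_top).ne, eventually_atTop.2 ⟨n₀, ?_⟩⟩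
    intro n hn
    induction n, hn using Nat.le_induction with
    | base => rfl
    | succ n hn ih =>
      have h1 : t (n + 1) - a = (t (n + 1) - t n) + (t n - a) := by ring
      rw [h1, AddValuation.map_add_eq_of_lt_right _ (by
        rw [ih]
        exact hn₀.trans_le ((gamma_mono u t hlt).monotone hn)), ih]
  · push_neg at hex
    refine Or.inr fun n => le_antisymm ?_ (hex n)
    by_contra hgt
    push_neg at hgt
    have h2 : u (t (n + 1) - t n) < u (t (n + 1) - a) :=
      (gamma_mono u t hlt n.lt_succ_self).trans_le (hex (n + 1))
    have h1 : t (n + 1) - t n = (t (n + 1) - a) - (t n - a) := by ring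
    have := u.map_le_sub (g := min (u (t (n + 1) - a)) (u (t n - a)))
      (min_le_left _ _) (min_le_right _ _)
    rw [← h1] at this
    exact absurd (lt_min h2 hgt) (not_lt.2 this)

end Abstract


/-! WithTop ℝ helpers -/

lemma wt_add_eq_zero {a b : WithTop ℝ} (ha : 0 ≤ a) (hb : 0 ≤ b) (hab : a + b = 0) :
    a = 0 := by
  induction a using WithTop.recTopCoe with
  | top => simp at hab
  | coe r =>
    induction b using WithTop.recTopCoe with
    | top => simp at hab
    | coe q =>
      rw [← WithTop.coe_add, ← WithTop.coe_zero, WithTop.coe_eq_coe] at hab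
      rw [← WithTop.coe_zero, WithTop.coe_le_coe] at ha hb
      rw [← WithTop.coe_zero, WithTop.coe_eq_coe]
      linarith

section Ext
variable {K : Type*} [Field K] (v : AddValuation K (WithTop ℝ))

/-- The valuation (sub)ring of `v` as a subring. -/
def intSub : Subring K where
  carrier := {x | 0 ≤ v x}
  zero_mem' := by simp
  one_mem' := by simp
  add_mem' {a b} ha hb := le_trans (le_min ha hb) (v.map_add a b)
  mul_mem' {a b} ha hb := by
    rw [Set.mem_setOf_eq, v.map_mul]; exact add_nonneg ha hb
  neg_mem' {a} ha := by rwa [Set.mem_setOf_eq, v.map_neg]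

lemma mem_intSub {x : K} : x ∈ intSub v ↔ 0 ≤ v x := Iff.rfl

lemma isUnit_intSub_iff (x : intSub v) : IsUnit x ↔ v (x : K) = 0 := by
  constructor
  · rintro ⟨⟨a, b, hab, hba⟩, rfl⟩
    have h1 : v ((a : K) * (b : K)) = v 1 := by
      rw [← Subring.coe_mul, hab]; rfl
    rw [v.map_mul, v.map_one] at h1
    exact wt_add_eq_zero a.2 b.2 h1
  · intro hx
    have hx0 : (x : K) ≠ 0 := by
      intro h
      rw [h, v.map_zero] at hx
      exact (WithTop.top_ne_zero) hx
    have hinv : (x : K)⁻¹ ∈ intSub v := by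
      rw [mem_intSub, v.map_inv, hx]
      simp
    refine isUnit_iff_exists_inv.2 ⟨⟨(x : K)⁻¹, hinv⟩, ?_⟩
    ext
    simp [mul_inv_cancel₀ hx0]

instance : Nontrivial (intSub v) :=
  ⟨0, 1, fun h => zero_ne_one (congrArg (Subtype.val) h)⟩

instance : IsLocalRing (intSub v) := by
  apply IsLocalRing.of_nonunits_add
  intro a b ha hb
  rw [mem_nonunits_iff, isUnit_intSub_iff] at ha hb ⊢
  have h1 : 0 < v (a : K) := lt_of_le_of_ne a.2 (Ne.symm ha)
  have h2 : 0 < v (b : K) := lt_of_le_of_ne b.2 (Ne.symm hb)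
  have : (0 : WithTop ℝ) < v ((a : K) + (b : K)) :=
    lt_of_lt_of_le (lt_min h1 h2) (v.map_add _ _)
  exact fun h => this.ne' h

variable {L : Type*} [Field L] [Algebra K L]

lemma exists_valuationSubring_ext :
    ∃ A : ValuationSubring L, ∀ k : K, algebraMap K L k ∈ A ↔ 0 ≤ v k := by
  obtain ⟨A, hmem, hloc⟩ :=
    IsLocalRing.exists_factor_valuationRing ((algebraMap K L).comp (Subring.subtype (intSub v)))
  refine ⟨A, fun k => ⟨?_, fun hk => hmem ⟨k, hk⟩⟩⟩
  intro hkA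
  by_contra hneg
  push_neg at hneg
  -- v k < 0; so k ≠ 0 and v k⁻¹ = - v k > 0
  have hk0 : k ≠ 0 := by
    intro h
    rw [h, v.map_zero] at hneg
    exact absurd le_top (not_le.2 hneg)
  obtain ⟨r, hr⟩ := WithTop.ne_top_iff_exists.1 (hneg.trans_le le_top).ne
  have hrneg : r < 0 := by
    rw [← WithTop.coe_lt_coe]
    rw [hr]
    exact_mod_cast hneg
  have hvinv : v k⁻¹ = ((-r : ℝ) : WithTop ℝ) := by
    rw [v.map_inv, ← hr]
    rfl
  have hinvmem : k⁻¹ ∈ intSub v := by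
    rw [mem_intSub, hvinv]
    exact_mod_cast (by linarith : (0:ℝ) ≤ -r)
  set f := (algebraMap K L).comp (Subring.subtype (intSub v))
  have hunit : IsUnit ((f.codRestrict A.toSubring hmem) ⟨k⁻¹, hinvmem⟩) := by
    refine isUnit_iff_exists_inv.2 ⟨⟨algebraMap K L k, hkA⟩, ?_⟩
    ext
    show algebraMap K L k⁻¹ * algebraMap K L k = 1
    rw [← map_mul, inv_mul_cancel₀ hk0, map_one]
  have := hloc.map_nonunit _ hunit
  rw [isUnit_intSub_iff] at this
  rw [hvinv] at this
  have : (-r : ℝ) = 0 := by exact_mod_cast this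
  linarith

end Ext


lemma wt_sub_nonneg {a b : WithTop ℝ} (hb : b ≠ ⊤) : 0 ≤ a - b ↔ b ≤ a := by
  obtain ⟨r, rfl⟩ := WithTop.ne_top_iff_exists.1 hb |>.imp (fun r h => h.symm)
  induction a using WithTop.recTopCoe with
  | top => simp
  | coe q =>
    rw [← WithTop.LinearOrderedAddCommGroup.coe_sub, ← WithTop.coe_zero,
      WithTop.coe_le_coe, WithTop.coe_le_coe]
    constructor <;> intro h <;> linarith

variable {K : Type*} [Field K] (v : AddValuation K (WithTop ℝ))
variable {L : Type*} [Field L] [Algebra K L]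
variable (A : ValuationSubring L)

lemma val_le_iff (hA : ∀ k : K, algebraMap K L k ∈ A ↔ 0 ≤ v k) {x y : K} (hy : y ≠ 0) :
    A.valuation (algebraMap K L x) ≤ A.valuation (algebraMap K L y) ↔ v y ≤ v x := by
  have hy' : algebraMap K L y ≠ 0 := fun h => hy ((map_eq_zero _).1 h)
  have hvy : A.valuation (algebraMap K L y) ≠ 0 := (Valuation.ne_zero_iff _).2 hy'
  rw [← div_le_one₀ (zero_lt_iff.2 hvy), ← Valuation.map_div, ← map_div₀ (algebraMap K L),
    ValuationSubring.valuation_le_one_iff, hA, AddValuation.map_div,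
    wt_sub_nonneg (v.ne_top_iff.2 hy)]



lemma exists_pair_val_eq {L : Type*} [Field L] {Γ : Type*} [LinearOrderedCommGroupWithZero Γ]
    (w : Valuation L Γ) {ι : Type*} {s : Finset ι} {f : ι → L}
    (h0 : ∀ i ∈ s, f i ≠ 0) (hsum : ∑ i ∈ s, f i = 0) (hne : s.Nonempty) :
    ∃ i ∈ s, ∃ j ∈ s, i ≠ j ∧ w (f i) = w (f j) := by
  classical
  obtain ⟨i₀, hi₀, hmax⟩ := s.exists_max_image (fun i => w (f i)) hne
  by_cases hex : ∃ j ∈ s.erase i₀, w (f j) = w (f i₀)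
  · obtain ⟨j, hj, hwj⟩ := hex
    exact ⟨j, Finset.mem_of_mem_erase hj, i₀, hi₀, Finset.ne_of_mem_erase hj, hwj⟩
  · exfalso
    push_neg at hex
    have hstrict : ∀ j ∈ s.erase i₀, w (f j) < w (f i₀) := fun j hj =>
      lt_of_le_of_ne (hmax j (Finset.mem_of_mem_erase hj)) (hex j hj)
    have hkey : f i₀ = -∑ j ∈ s.erase i₀, f j := by
      have := Finset.add_sum_erase s f hi₀
      rw [hsum] at this
      linear_combination this
    have h1 : w (f i₀) = w (∑ j ∈ s.erase i₀, f j) := by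
      rw [hkey, Valuation.map_neg]
    have h2 : w (∑ j ∈ s.erase i₀, f j) < w (f i₀) :=
      w.map_sum_lt ((Valuation.ne_zero_iff w).2 (h0 i₀ hi₀)) hstrict
    rw [← h1] at h2
    exact lt_irrefl _ h2

variable {K : Type*} [Field K] (v : AddValuation K (WithTop ℝ))
variable {L : Type*} [Field L] [Algebra K L] [Algebra.IsAlgebraic K L]
variable (A : ValuationSubring L)

lemma exists_pow_val_eq (x : L) (hx : x ≠ 0) :
    ∃ m : ℕ, 0 < m ∧ ∃ y : K, y ≠ 0 ∧
      A.valuation (x ^ m) = A.valuation (algebraMap K L y) := by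
  have hint : IsIntegral K x := (Algebra.IsAlgebraic.isAlgebraic x).isIntegral
  set p := minpoly K x with hp
  have hp0 : p ≠ 0 := minpoly.ne_zero hint
  have haev : ∑ i ∈ p.support, algebraMap K L (p.coeff i) * x ^ i = 0 := by
    have := minpoly.aeval K x
    rwa [Polynomial.aeval_def, Polynomial.eval₂_eq_sum, Polynomial.sum_def] at this
  have h0 : ∀ i ∈ p.support, algebraMap K L (p.coeff i) * x ^ i ≠ 0 := by
    intro i hi
    exact mul_ne_zero (fun h => Polynomial.mem_support_iff.1 hi ((map_eq_zero _).1 h))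
      (pow_ne_zero _ hx)
  obtain ⟨i, hi, j, hj, hij, hweq⟩ := exists_pair_val_eq A.valuation h0 haev
    (Polynomial.nonempty_support_iff.2 hp0)
  have hvx : A.valuation x ≠ 0 := (Valuation.ne_zero_iff _).2 hx
  -- wlog i < j
  have main : ∀ i j : ℕ, i < j → p.coeff i ≠ 0 → p.coeff j ≠ 0 →
      A.valuation (algebraMap K L (p.coeff i)) * (A.valuation x) ^ i =
        A.valuation (algebraMap K L (p.coeff j)) * (A.valuation x) ^ j →
      ∃ m : ℕ, 0 < m ∧ ∃ y : K, y ≠ 0 ∧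
        A.valuation (x ^ m) = A.valuation (algebraMap K L y) := by
    intro i j hlt hci hcj heq
    refine ⟨j - i, Nat.sub_pos_of_lt hlt, p.coeff i / p.coeff j, div_ne_zero hci hcj, ?_⟩
    rw [map_div₀, Valuation.map_div, Valuation.map_pow]
    have hxj : (A.valuation x) ^ j = (A.valuation x) ^ i * (A.valuation x) ^ (j - i) := by
      rw [← pow_add, Nat.add_sub_cancel' hlt.le]
    rw [hxj, ← mul_assoc] at heq
    have hvcj : A.valuation (algebraMap K L (p.coeff j)) ≠ 0 :=
      (Valuation.ne_zero_iff _).2 fun h => hcj ((map_eq_zero _).1 h)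
    have hxi : (A.valuation x) ^ i ≠ 0 := pow_ne_zero _ hvx
    rw [eq_div_iff hvcj]
    refine mul_right_cancel₀ hxi ?_
    rw [heq]
    exact mul_right_comm _ _ _ |>.symm.trans
      (by rw [mul_comm (A.valuation x ^ (j - i))]; exact (mul_rotate _ _ _).symm)
  rw [Valuation.map_mul, Valuation.map_mul, Valuation.map_pow, Valuation.map_pow] at hweq
  rcases hij.lt_or_gt with h | h
  · exact main i j h (Polynomial.mem_support_iff.1 hi) (Polynomial.mem_support_iff.1 hj) hweq
  · exact main j i h (Polynomial.mem_support_iff.1 hj) (Polynomial.mem_support_iff.1 hi) hweq.symm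



variable {K : Type*} [Field K] (v : AddValuation K (WithTop ℝ))

/-- real value of the valuation -/
noncomputable def vR (y : K) : ℝ := (v y).untopD 0

lemma coe_vR {y : K} (hy : y ≠ 0) : ((vR v y : ℝ) : WithTop ℝ) = v y := by
  obtain ⟨r, hr⟩ := WithTop.ne_top_iff_exists.1 (v.ne_top_iff.2 hy)
  rw [vR, ← hr, WithTop.untopD_coe]

lemma vR_mul {a b : K} (ha : a ≠ 0) (hb : b ≠ 0) : vR v (a * b) = vR v a + vR v b := by
  have : ((vR v (a * b) : ℝ) : WithTop ℝ) = ((vR v a + vR v b : ℝ) : WithTop ℝ) := by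
    rw [coe_vR v (mul_ne_zero ha hb), v.map_mul, WithTop.coe_add, coe_vR v ha, coe_vR v hb]
  exact_mod_cast this

lemma vR_pow {a : K} (ha : a ≠ 0) (n : ℕ) : vR v (a ^ n) = n * vR v a := by
  induction n with
  | zero => simp [vR]
  | succ n ih =>
    rw [pow_succ, vR_mul v (pow_ne_zero _ ha) ha, ih]
    push_cast
    ring

lemma vR_le_vR {a b : K} (ha : a ≠ 0) (hb : b ≠ 0) (h : v a ≤ v b) : vR v a ≤ vR v b := by
  rw [← WithTop.coe_le_coe, coe_vR v ha, coe_vR v hb]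
  exact h


section UVal

variable {K : Type*} [Field K] (v : AddValuation K (WithTop ℝ))
variable {L : Type*} [Field L] [Algebra K L] [Algebra.IsAlgebraic K L]
variable (A : ValuationSubring L)

open Classical in
/-- The extension of `v` to `L`. -/
noncomputable def uval (x : L) : WithTop ℝ :=
  if hx : x = 0 then ⊤
  else ((((v (exists_pow_val_eq (K := K) A x hx).choose_spec.2.choose).untopD 0) /
        ((exists_pow_val_eq (K := K) A x hx).choose : ℝ) : ℝ) : WithTop ℝ)

lemma uval_zero : uval v A 0 = ⊤ := dif_pos rfl

lemma uval_ne_top {x : L} (hx : x ≠ 0) : uval v A x ≠ ⊤ := by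
  rw [uval, dif_neg hx]
  exact WithTop.coe_ne_top

lemma val_eq_transfer (hA : ∀ k : K, algebraMap K L k ∈ A ↔ 0 ≤ v k)
    {a b : K} (ha : a ≠ 0) (hb : b ≠ 0)
    (h : A.valuation (algebraMap K L a) = A.valuation (algebraMap K L b)) : v a = v b :=
  le_antisymm ((val_le_iff v A hA ha).1 h.ge) ((val_le_iff v A hA hb).1 h.le)

lemma pow_val_eq_algebraMap {x : L} {m : ℕ} {y : K}
    (h : A.valuation (x ^ m) = A.valuation (algebraMap K L y)) (m' : ℕ) :
    A.valuation (x ^ (m * m')) = A.valuation (algebraMap K L (y ^ m')) := by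
  rw [pow_mul, Valuation.map_pow, h, map_pow, Valuation.map_pow]

lemma uval_spec (hA : ∀ k : K, algebraMap K L k ∈ A ↔ 0 ≤ v k) {x : L} (hx : x ≠ 0)
    {m : ℕ} (hm : 0 < m) {y : K} (hy : y ≠ 0)
    (h : A.valuation (x ^ m) = A.valuation (algebraMap K L y)) :
    uval v A x = ((vR v y / m : ℝ) : WithTop ℝ) := by
  rw [uval, dif_neg hx]
  set E := exists_pow_val_eq (K := K) A x hx with hE
  have hm' : 0 < E.choose := E.choose_spec.1
  have hy' : E.choose_spec.2.choose ≠ 0 := E.choose_spec.2.choose_spec.1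
  have h' : A.valuation (x ^ E.choose) = A.valuation (algebraMap K L E.choose_spec.2.choose) :=
    E.choose_spec.2.choose_spec.2
  set m' := E.choose
  set y' := E.choose_spec.2.choose
  have e1 := pow_val_eq_algebraMap A h' m
  have e2 := pow_val_eq_algebraMap A h m'
  rw [mul_comm m' m] at e1
  have e3 : v (y ^ m') = v (y' ^ m) :=
    val_eq_transfer v A hA (pow_ne_zero _ hy) (pow_ne_zero _ hy') (e2.symm.trans e1)
  have e4 : (m' : ℝ) * vR v y = (m : ℝ) * vR v y' := by
    rw [← vR_pow v hy m', ← vR_pow v hy' m]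
    exact congrArg (fun z => (z.untopD 0 : ℝ)) e3
  rw [WithTop.coe_eq_coe]
  have hm0 : (m : ℝ) ≠ 0 := Nat.cast_ne_zero.2 hm.ne'
  have hm'0 : (m' : ℝ) ≠ 0 := Nat.cast_ne_zero.2 hm'.ne'
  show vR v y' / (m' : ℝ) = vR v y / (m : ℝ)
  rw [div_eq_div_iff hm'0 hm0]
  linarith [e4]

lemma uval_algebraMap (hA : ∀ k : K, algebraMap K L k ∈ A ↔ 0 ≤ v k) (k : K) :
    uval v A (algebraMap K L k) = v k := by
  by_cases hk : k = 0
  · rw [hk, map_zero, uval_zero, v.map_zero]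
  · have h : A.valuation ((algebraMap K L k) ^ 1) = A.valuation (algebraMap K L k) := by
      rw [pow_one]
    rw [uval_spec v A hA (fun h0 => hk ((map_eq_zero _).1 h0)) one_pos hk h,
      Nat.cast_one, div_one, coe_vR v hk]

lemma uval_mul (hA : ∀ k : K, algebraMap K L k ∈ A ↔ 0 ≤ v k) (x y : L) :
    uval v A (x * y) = uval v A x + uval v A y := by
  by_cases hx : x = 0
  · rw [hx, zero_mul, uval_zero, WithTop.top_add]
  by_cases hy : y = 0
  · rw [hy, mul_zero, uval_zero, WithTop.add_top]
  obtain ⟨m, hm, a, ha, hxa⟩ := exists_pow_val_eq (K := K) A x hx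
  obtain ⟨m', hm', b, hb, hyb⟩ := exists_pow_val_eq (K := K) A y hy
  have hxy : x * y ≠ 0 := mul_ne_zero hx hy
  have e1 := pow_val_eq_algebraMap A hxa m'
  have e2 := pow_val_eq_algebraMap A hyb m
  rw [mul_comm m' m] at e2
  have hprod : A.valuation ((x * y) ^ (m * m')) =
      A.valuation (algebraMap K L (a ^ m' * b ^ m)) := by
    rw [mul_pow, Valuation.map_mul, e1, e2, ← Valuation.map_mul, ← map_mul]
  rw [uval_spec v A hA hxy (Nat.mul_pos hm hm') (mul_ne_zero (pow_ne_zero _ ha)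
      (pow_ne_zero _ hb)) hprod,
    uval_spec v A hA hx hm ha hxa, uval_spec v A hA hy hm' hb hyb,
    ← WithTop.coe_add, WithTop.coe_eq_coe,
    vR_mul v (pow_ne_zero _ ha) (pow_ne_zero _ hb), vR_pow v ha, vR_pow v hb]
  have hm0 : (m : ℝ) ≠ 0 := Nat.cast_ne_zero.2 hm.ne'
  have hm'0 : (m' : ℝ) ≠ 0 := Nat.cast_ne_zero.2 hm'.ne'
  field_simp
  push_cast
  ring

lemma uval_mono (hA : ∀ k : K, algebraMap K L k ∈ A ↔ 0 ≤ v k) {x y : L}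
    (hx : x ≠ 0) (hy : y ≠ 0) (h : A.valuation x ≤ A.valuation y) :
    uval v A y ≤ uval v A x := by
  obtain ⟨m, hm, a, ha, hxa⟩ := exists_pow_val_eq (K := K) A x hx
  obtain ⟨m', hm', b, hb, hyb⟩ := exists_pow_val_eq (K := K) A y hy
  have e1 := pow_val_eq_algebraMap A hxa m'
  have e2 := pow_val_eq_algebraMap A hyb m
  rw [mul_comm m' m] at e2
  have hpow : A.valuation (x ^ (m * m')) ≤ A.valuation (y ^ (m * m')) := by
    rw [Valuation.map_pow, Valuation.map_pow]
    exact pow_le_pow_left' h _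
  rw [e1, e2] at hpow
  have e3 : v (b ^ m) ≤ v (a ^ m') := (val_le_iff v A hA (pow_ne_zero _ hb)).1 hpow
  have e4 : (m : ℝ) * vR v b ≤ (m' : ℝ) * vR v a := by
    rw [← vR_pow v hb m, ← vR_pow v ha m']
    exact vR_le_vR v (pow_ne_zero _ hb) (pow_ne_zero _ ha) e3
  rw [uval_spec v A hA hx hm ha hxa, uval_spec v A hA hy hm' hb hyb, WithTop.coe_le_coe]
  rw [div_le_div_iff₀ (by exact_mod_cast hm') (by exact_mod_cast hm)]
  linarith

lemma uval_add (hA : ∀ k : K, algebraMap K L k ∈ A ↔ 0 ≤ v k) (x y : L) :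
    min (uval v A x) (uval v A y) ≤ uval v A (x + y) := by
  by_cases hx : x = 0
  · rw [hx, zero_add, uval_zero]
    exact min_le_right _ _
  by_cases hy : y = 0
  · rw [hy, add_zero, uval_zero]
    exact min_le_left _ _
  by_cases hxy : x + y = 0
  · rw [hxy, uval_zero]; exact le_top
  rcases le_total (A.valuation y) (A.valuation x) with h | h
  · have h1 : A.valuation (x + y) ≤ A.valuation x := by
      refine le_trans (A.valuation.map_add x y) ?_
      rw [max_eq_left h]
    exact (min_le_left _ _).trans (uval_mono v A hA hxy hx h1)
  · have h1 : A.valuation (x + y) ≤ A.valuation y := by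
      refine le_trans (A.valuation.map_add x y) ?_
      rw [max_eq_right h]
    exact le_trans (min_le_right _ _) (uval_mono v A hA hxy hy h1)

lemma uval_one (hA : ∀ k : K, algebraMap K L k ∈ A ↔ 0 ≤ v k) : uval v A 1 = 0 := by
  rw [← map_one (algebraMap K L), uval_algebraMap v A hA, v.map_one]

/-- The extension of `v` to `L`, as an `AddValuation`. -/
noncomputable def uAdd (hA : ∀ k : K, algebraMap K L k ∈ A ↔ 0 ≤ v k) :
    AddValuation L (WithTop ℝ) :=
  AddValuation.of (uval v A) (uval_zero v A) (uval_one v A hA) (uval_add v A hA)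
    (uval_mul v A hA)

lemma uAdd_apply (hA : ∀ k : K, algebraMap K L k ∈ A ↔ 0 ≤ v k) (x : L) :
    uAdd v A hA x = uval v A x := rfl

end UVal

section LemA

variable {K : Type*} [Field K] (v : AddValuation K (WithTop ℝ)) (s : ℕ → K)

/-- multiset version of multiplicativity -/
lemma addval_multiset_prod {L : Type*} [Field L] (u : AddValuation L (WithTop ℝ))
    (M : Multiset L) : u M.prod = (M.map fun a => u a).sum := by
  induction M using Multiset.induction with
  | empty => simp
  | cons a M ih => rw [Multiset.prod_cons, AddValuation.map_mul, Multiset.map_cons,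
      Multiset.sum_cons, ih]

lemma multiset_sum_form {L : Type*} [Field L] (u : AddValuation L (WithTop ℝ)) (t : ℕ → L)
    (hlt : ∀ n, u (t (n + 1) - t n) < u (t (n + 2) - t (n + 1)))
    (g : ℕ → ℝ) (hg : ∀ n, ((g n : ℝ) : WithTop ℝ) = u (t (n + 1) - t n))
    (M : Multiset L) :
    ∃ (k : ℕ) (β : ℝ), ∀ᶠ n in atTop,
      ((M.map fun a => u (t n - a)).sum : WithTop ℝ) = ((β + k * g n : ℝ) : WithTop ℝ) := by
  induction M using Multiset.induction with
  | empty =>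
    exact ⟨0, 0, Eventually.of_forall fun n => by simp⟩
  | cons a M ih =>
    obtain ⟨k, β, hev⟩ := ih
    rcases dichotomy u t hlt a with ⟨c, hctop, hc⟩ | hper
    · obtain ⟨c', hc'⟩ := WithTop.ne_top_iff_exists.1 hctop
      refine ⟨k, β + c', ?_⟩
      filter_upwards [hev, hc] with n h1 h2
      rw [Multiset.map_cons, Multiset.sum_cons, h1, h2, ← hc', ← WithTop.coe_add,
        WithTop.coe_eq_coe]
      ring
    · refine ⟨k + 1, β, ?_⟩
      filter_upwards [hev] with n h1
      rw [Multiset.map_cons, Multiset.sum_cons, h1, hper n, ← hg n, ← WithTop.coe_add,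
        WithTop.coe_eq_coe]
      push_cast
      ring

lemma lemA2 (hE : ∀ n, v (s (n + 1) - s n) < v (s (n + 2) - s (n + 1)))
    (b : K) (hb : b ≠ 0) (hbb : ∀ n, v (s (n + 1) - s n) < v b)
    (h : Polynomial K) (hne : h ≠ 0) :
    ∃ Lh : ℝ, (∀ᶠ n in atTop, v (h.eval (s n)) ≠ ⊤) ∧
      Tendsto (fun n => (v (h.eval (s n))).untopD 0) atTop (nhds Lh) := by
  classical
  set L := AlgebraicClosure K
  obtain ⟨A, hA⟩ := exists_valuationSubring_ext v (L := L)
  set u := uAdd v A hA with hu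
  set t : ℕ → L := fun n => algebraMap K L (s n) with ht
  have hut : ∀ x : K, u (algebraMap K L x) = v x := fun x => by
    rw [hu, uAdd_apply, uval_algebraMap v A hA]
  have htdiff : ∀ m n : ℕ, u (t m - t n) = v (s m - s n) := fun m n => by
    rw [ht, ← map_sub, hut]
  have hlt : ∀ n, u (t (n + 1) - t n) < u (t (n + 2) - t (n + 1)) := fun n => by
    rw [htdiff, htdiff]; exact hE n
  -- real gauge sequence
  set g : ℕ → ℝ := fun n => vR v (s (n + 1) - s n) with hgdef
  have hgcoe : ∀ n, ((g n : ℝ) : WithTop ℝ) = v (s (n + 1) - s n) := fun n => by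
    apply coe_vR
    intro h0
    have := gamma_ne_top v s hE n
    rw [h0, v.map_zero] at this
    exact this rfl
  have hgcoe' : ∀ n, ((g n : ℝ) : WithTop ℝ) = u (t (n + 1) - t n) := fun n => by
    rw [htdiff]; exact hgcoe n
  have hgmono : StrictMono g := by
    intro m n hmn
    have := gamma_mono v s hE hmn
    rw [← WithTop.coe_lt_coe, hgcoe m, hgcoe n]
    exact this
  have hgbdd : BddAbove (Set.range g) := by
    refine ⟨vR v b, ?_⟩
    rintro x ⟨n, rfl⟩
    have h1 : v (s (n + 1) - s n) ≤ v b := (hbb n).le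
    rw [← WithTop.coe_le_coe, hgcoe n, coe_vR v hb]
    exact h1
  have hgtend : Tendsto g atTop (nhds (⨆ n, g n)) :=
    tendsto_atTop_ciSup hgmono.monotone hgbdd
  -- factorization of h over L
  set hL : Polynomial L := h.map (algebraMap K L) with hhL
  have hLne : hL ≠ 0 := Polynomial.map_ne_zero hne
  have hsplit : hL.roots.card = hL.natDegree :=
    (Polynomial.splits_iff_card_roots).1 (IsAlgClosed.splits hL)
  have hfact := Polynomial.C_leadingCoeff_mul_prod_multiset_X_sub_C hsplit
  have heval : ∀ n, v (h.eval (s n)) =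
      u hL.leadingCoeff + ((hL.roots.map fun a => u (t n - a)).sum) := by
    intro n
    have e1 : hL.eval (t n) = algebraMap K L (h.eval (s n)) := by
      rw [hhL, Polynomial.eval_map, Polynomial.eval₂_at_apply]
    have e2 : hL.eval (t n) =
        hL.leadingCoeff * ((hL.roots.map fun a => t n - a).prod) := by
      conv_lhs => rw [← hfact]
      rw [Polynomial.eval_mul, Polynomial.eval_C, Polynomial.eval_multiset_prod,
        Multiset.map_map]
      simp
    rw [← hut (h.eval (s n)), ← e1, e2, AddValuation.map_mul, addval_multiset_prod,
      Multiset.map_map]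
    rfl
  obtain ⟨k, β, hev⟩ := multiset_sum_form u t hlt g hgcoe' hL.roots
  obtain ⟨c₀, hc₀⟩ := WithTop.ne_top_iff_exists.1
    (uval_ne_top v A (x := hL.leadingCoeff) (Polynomial.leadingCoeff_ne_zero.2 hLne))
  rw [← uAdd_apply v A hA, ← hu] at hc₀
  refine ⟨c₀ + β + k * (⨆ n, g n), ?_, ?_⟩
  · filter_upwards [hev] with n h1
    rw [heval n, h1, ← hc₀]
    show ((c₀ : ℝ) : WithTop ℝ) + _ ≠ ⊤
    rw [← WithTop.coe_add]
    exact WithTop.coe_ne_top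
  · have hevt : ∀ᶠ n in atTop,
        (v (h.eval (s n))).untopD 0 = c₀ + β + k * g n := by
      filter_upwards [hev] with n h1
      rw [heval n, h1, ← hc₀]
      rw [show ((c₀ : ℝ) : WithTop ℝ) + ((β + k * g n : ℝ) : WithTop ℝ)
          = ((c₀ + β + k * g n : ℝ) : WithTop ℝ) by rw [← WithTop.coe_add]; ring_nf]
      rw [WithTop.untopD_coe]
    refine Tendsto.congr' (hevt.mono fun n h => h.symm) ?_
    have : Tendsto (fun n => c₀ + β + k * g n) atTop (nhds (c₀ + β + k * (⨆ n, g n))) := by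
      exact (hgtend.const_mul (k : ℝ)).const_add (c₀ + β)
    simpa [add_assoc] using this

end LemA

section Final

variable {K : Type*} [Field K] (v : AddValuation K (WithTop ℝ)) (s : ℕ → K)

lemma lemA1 (hE : ∀ n, v (s (n + 1) - s n) < v (s (n + 2) - s (n + 1)))
    (htrans : ∀ f : Polynomial K, ∃ c : WithTop ℝ, ∀ᶠ n in atTop, v (f.eval (s n)) = c)
    {h : Polynomial K} (hne : h ≠ 0) :
    ∃ Lh : ℝ, (∀ᶠ n in atTop, v (h.eval (s n)) ≠ ⊤) ∧
      Tendsto (fun n => (v (h.eval (s n))).untopD 0) atTop (nhds Lh) := by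
  obtain ⟨c, hc⟩ := htrans h
  by_cases hctop : c = ⊤
  · exfalso
    rw [hctop] at hc
    obtain ⟨N, hN⟩ := eventually_atTop.1 hc
    apply hne
    apply Polynomial.eq_zero_of_infinite_isRoot
    apply Set.infinite_of_injective_forall_mem (f := fun i : ℕ => s (N + i))
    · intro i j hij
      exact Nat.add_left_cancel (t_inj v s hE hij)
    · intro a
      have := hN (N + a) (Nat.le_add_right _ _)
      exact (v.top_iff).1 this
  · obtain ⟨c', hc'⟩ := WithTop.ne_top_iff_exists.1 hctop
    refine ⟨c', ?_, ?_⟩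
    · filter_upwards [hc] with n h1
      rw [h1, ← hc']
      exact WithTop.coe_ne_top
    · refine Tendsto.congr' ?_ tendsto_const_nhds
      filter_upwards [hc] with n h1
      rw [h1, ← hc', WithTop.untopD_coe]

lemma lam_mul (lam : Polynomial K → ℝ)
    (hlam : ∀ h : Polynomial K, h ≠ 0 → (∀ᶠ n in atTop, v (h.eval (s n)) ≠ ⊤) ∧
      Tendsto (fun n => (v (h.eval (s n))).untopD 0) atTop (nhds (lam h)))
    {p q : Polynomial K} (hp : p ≠ 0) (hq : q ≠ 0) :
    lam (p * q) = lam p + lam q := by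
  obtain ⟨hp1, hp2⟩ := hlam p hp
  obtain ⟨hq1, hq2⟩ := hlam q hq
  obtain ⟨hpq1, hpq2⟩ := hlam (p * q) (mul_ne_zero hp hq)
  have hev : ∀ᶠ n in atTop, (v (p.eval (s n))).untopD 0 + (v (q.eval (s n))).untopD 0
      = (v ((p * q).eval (s n))).untopD 0 := by
    filter_upwards [hp1, hq1] with n h1 h2
    obtain ⟨a, ha⟩ := WithTop.ne_top_iff_exists.1 h1
    obtain ⟨b, hb⟩ := WithTop.ne_top_iff_exists.1 h2
    rw [Polynomial.eval_mul, v.map_mul, ← ha, ← hb, ← WithTop.coe_add, WithTop.untopD_coe,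
      WithTop.untopD_coe, WithTop.untopD_coe]
  exact (tendsto_nhds_unique ((hp2.add hq2).congr' hev) hpq2).symm

end Final

end Stmt13

/-- Membership in V_E: φ(s_n) is defined and lies in V for all but finitely many n. -/
def memVE {K : Type*} [Field K]
    (v : AddValuation K (WithTop ℝ)) (s : ℕ → K) (φ : RatFunc K) : Prop :=
  ∀ᶠ n in atTop, (RatFunc.denom φ).eval (s n) ≠ 0 ∧
    0 ≤ v (RatFunc.eval (RingHom.id K) (s n) φ)

/-- For E pseudo-convergent of transcendental type, or of algebraic type with
nonzero breadth ideal, the map w_E(φ) = lim v(φ(s_n)) is a well-defined rank one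
valuation on K(X) extending v, whose valuation ring W_E contains V_E. -/
theorem stmt13 {K : Type*} [Field K] (v : AddValuation K (WithTop ℝ)) (s : ℕ → K)
    (hE : ∀ n, v (s (n + 1) - s n) < v (s (n + 2) - s (n + 1)))
    (htype : (∀ f : Polynomial K, ∃ c : WithTop ℝ, ∀ᶠ n in atTop, v (f.eval (s n)) = c)
      ∨ ((∃ f : Polynomial K, ∃ N, ∀ n ≥ N, v (f.eval (s n)) < v (f.eval (s (n + 1)))) ∧
          ∃ b : K, b ≠ 0 ∧ ∀ n, v (s (n + 1) - s n) < v b)) :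
    ∃ w : AddValuation (RatFunc K) (WithTop ℝ),
      (∀ c : K, w (RatFunc.C c) = v c) ∧
      (∀ φ : RatFunc K, φ ≠ 0 → ∃ L : ℝ, w φ = (L : WithTop ℝ) ∧
        Tendsto (fun n => WithTop.untopD 0 (v (RatFunc.eval (RingHom.id K) (s n) φ)))
          atTop (nhds L)) ∧
      (∀ φ : RatFunc K, memVE v s φ → 0 ≤ w φ) := by
  classical
  have lemA : ∀ h : Polynomial K, h ≠ 0 → ∃ Lh : ℝ,
      (∀ᶠ n in atTop, v (h.eval (s n)) ≠ ⊤) ∧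
      Tendsto (fun n => (v (h.eval (s n))).untopD 0) atTop (nhds Lh) := by
    rcases htype with htrans | ⟨_, b, hb, hbb⟩
    · exact fun h hne => Stmt13.lemA1 v s hE htrans hne
    · exact fun h hne => Stmt13.lemA2 v s hE b hb hbb h hne
  choose lam0 hlam0 using lemA
  set lam : Polynomial K → ℝ := fun h => if hh : h = 0 then 0 else lam0 h hh with hlamdef
  have hlam : ∀ h : Polynomial K, h ≠ 0 → (∀ᶠ n in atTop, v (h.eval (s n)) ≠ ⊤) ∧
      Tendsto (fun n => (v (h.eval (s n))).untopD 0) atTop (nhds (lam h)) := by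
    intro h hne
    have h1 := hlam0 h hne
    have h2 : lam h = lam0 h hne := by rw [hlamdef]; exact dif_neg hne
    rw [h2]
    exact h1
  have hmul : ∀ {p q : Polynomial K}, p ≠ 0 → q ≠ 0 → lam (p * q) = lam p + lam q :=
    fun {p q} hp hq => Stmt13.lam_mul v s lam hlam hp hq
  have hlam1 : lam 1 = 0 := by
    have h1 := (hlam 1 one_ne_zero).2
    have h2 : Tendsto (fun n => (v ((1 : Polynomial K).eval (s n))).untopD 0)
        atTop (nhds 0) := by
      refine Tendsto.congr' (Eventually.of_forall fun n => ?_) tendsto_const_nhds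
      show (0 : ℝ) = (v ((1 : Polynomial K).eval (s n))).untopD 0
      rw [Polynomial.eval_one, v.map_one]
      rfl
    exact tendsto_nhds_unique h1 h2
  set W : RatFunc K → WithTop ℝ := fun φ =>
    if φ = 0 then ⊤ else ((lam φ.num - lam φ.denom : ℝ) : WithTop ℝ) with hWdef
  have W0 : W 0 = ⊤ := if_pos rfl
  have Wne : ∀ {φ : RatFunc K}, φ ≠ 0 →
      W φ = ((lam φ.num - lam φ.denom : ℝ) : WithTop ℝ) := fun {φ} hφ => if_neg hφ
  have W1 : W 1 = 0 := by
    rw [Wne one_ne_zero, RatFunc.num_one, RatFunc.denom_one, sub_self, WithTop.coe_zero]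
  have Wmul : ∀ x y, W (x * y) = W x + W y := by
    intro x y
    by_cases hx : x = 0
    · rw [hx, zero_mul, W0, WithTop.top_add]
    by_cases hy : y = 0
    · rw [hy, mul_zero, W0, WithTop.add_top]
    have hxy : x * y ≠ 0 := mul_ne_zero hx hy
    rw [Wne hxy, Wne hx, Wne hy, ← WithTop.coe_add, WithTop.coe_eq_coe]
    have E := congrArg lam (RatFunc.num_denom_mul x y)
    rw [hmul (RatFunc.num_ne_zero hxy)
        (mul_ne_zero (RatFunc.denom_ne_zero x) (RatFunc.denom_ne_zero y)),
      hmul (RatFunc.denom_ne_zero x) (RatFunc.denom_ne_zero y),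
      hmul (mul_ne_zero (RatFunc.num_ne_zero hx) (RatFunc.num_ne_zero hy))
        (RatFunc.denom_ne_zero _),
      hmul (RatFunc.num_ne_zero hx) (RatFunc.num_ne_zero hy)] at E
    linarith
  have Wadd : ∀ x y, min (W x) (W y) ≤ W (x + y) := by
    intro x y
    by_cases hx : x = 0
    · rw [hx, zero_add, W0]; exact min_le_right _ _
    by_cases hy : y = 0
    · rw [hy, add_zero, W0]; exact min_le_left _ _
    by_cases hxy : x + y = 0
    · rw [hxy, W0]; exact le_top
    set P := x.num * y.denom + x.denom * y.num with hP
    have hPne : P ≠ 0 := by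
      intro h0
      have hnd := RatFunc.num_denom_add x y
      rw [← hP, h0, zero_mul] at hnd
      exact (mul_ne_zero (RatFunc.num_ne_zero hxy)
        (mul_ne_zero (RatFunc.denom_ne_zero x) (RatFunc.denom_ne_zero y))) hnd
    have hmin : min (lam x.num + lam y.denom) (lam x.denom + lam y.num) ≤ lam P := by
      refine le_of_tendsto_of_tendsto
        (((hlam x.num (RatFunc.num_ne_zero hx)).2.add
            (hlam y.denom (RatFunc.denom_ne_zero y)).2).min
          ((hlam x.denom (RatFunc.denom_ne_zero x)).2.add
            (hlam y.num (RatFunc.num_ne_zero hy)).2))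
        (hlam P hPne).2 ?_
      filter_upwards [(hlam x.num (RatFunc.num_ne_zero hx)).1,
        (hlam y.denom (RatFunc.denom_ne_zero y)).1,
        (hlam x.denom (RatFunc.denom_ne_zero x)).1,
        (hlam y.num (RatFunc.num_ne_zero hy)).1,
        (hlam P hPne).1] with n h1 h2 h3 h4 h5
      obtain ⟨a, ha⟩ := WithTop.ne_top_iff_exists.1 h1
      obtain ⟨b, hb⟩ := WithTop.ne_top_iff_exists.1 h2
      obtain ⟨c, hc⟩ := WithTop.ne_top_iff_exists.1 h3
      obtain ⟨d, hd⟩ := WithTop.ne_top_iff_exists.1 h4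
      obtain ⟨e, he⟩ := WithTop.ne_top_iff_exists.1 h5
      have hv : ((min (a + b) (c + d) : ℝ) : WithTop ℝ) ≤ v (P.eval (s n)) := by
        have hps : P.eval (s n) = (x.num.eval (s n)) * (y.denom.eval (s n))
            + (x.denom.eval (s n)) * (y.num.eval (s n)) := by
          rw [hP, Polynomial.eval_add, Polynomial.eval_mul, Polynomial.eval_mul]
        rw [hps, WithTop.coe_min]
        refine le_trans (min_le_min ?_ ?_) (v.map_add _ _)
        · rw [v.map_mul, ← ha, ← hb, ← WithTop.coe_add]
        · rw [v.map_mul, ← hc, ← hd, ← WithTop.coe_add]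
      rw [← he, WithTop.coe_le_coe] at hv
      rw [← ha, ← hb, ← hc, ← hd, ← he, WithTop.untopD_coe, WithTop.untopD_coe,
        WithTop.untopD_coe, WithTop.untopD_coe, WithTop.untopD_coe]
      exact hv
    have E := congrArg lam (RatFunc.num_denom_add x y)
    rw [hmul (RatFunc.num_ne_zero hxy)
        (mul_ne_zero (RatFunc.denom_ne_zero x) (RatFunc.denom_ne_zero y)),
      hmul (RatFunc.denom_ne_zero x) (RatFunc.denom_ne_zero y),
      hmul hPne (RatFunc.denom_ne_zero _)] at E
    rw [Wne hxy, Wne hx, Wne hy, ← WithTop.coe_min, WithTop.coe_le_coe]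
    rcases le_total (lam x.num + lam y.denom) (lam x.denom + lam y.num) with hmm | hmm
    · rw [min_eq_left hmm] at hmin
      exact min_le_iff.2 (Or.inl (by linarith))
    · rw [min_eq_right hmm] at hmin
      exact min_le_iff.2 (Or.inr (by linarith))
  have evalrepr : ∀ {φ : RatFunc K}, φ ≠ 0 → ∀ᶠ n in atTop,
      v (RatFunc.eval (RingHom.id K) (s n) φ) =
        (((v (φ.num.eval (s n))).untopD 0 - (v (φ.denom.eval (s n))).untopD 0 : ℝ) :
          WithTop ℝ) := by
    intro φ hφ
    filter_upwards [(hlam φ.num (RatFunc.num_ne_zero hφ)).1,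
      (hlam φ.denom (RatFunc.denom_ne_zero φ)).1] with n h1 h2
    obtain ⟨a, ha⟩ := WithTop.ne_top_iff_exists.1 h1
    obtain ⟨b, hb⟩ := WithTop.ne_top_iff_exists.1 h2
    have hev : RatFunc.eval (RingHom.id K) (s n) φ =
        φ.num.eval (s n) / φ.denom.eval (s n) := rfl
    rw [hev, v.map_div, ← ha, ← hb, WithTop.untopD_coe, WithTop.untopD_coe,
      ← WithTop.LinearOrderedAddCommGroup.coe_sub]
  refine ⟨AddValuation.of W W0 W1 Wadd Wmul, ?_, ?_, ?_⟩
  · intro c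
    rw [AddValuation.of_apply]
    by_cases hc : c = 0
    · rw [hc, map_zero, W0, v.map_zero]
    · have hCc : RatFunc.C c ≠ 0 := fun h0 => hc ((map_eq_zero _).1 h0)
      have hpc : (Polynomial.C c : Polynomial K) ≠ 0 := fun h0 => hc (by
        simpa using congrArg (fun p => Polynomial.coeff p 0) h0)
      have h1 := (hlam (Polynomial.C c) hpc).2
      have h2 : Tendsto (fun n => (v ((Polynomial.C c).eval (s n))).untopD 0)
          atTop (nhds (Stmt13.vR v c)) := by
        refine Tendsto.congr' (Eventually.of_forall fun n => ?_) tendsto_const_nhds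
        show Stmt13.vR v c = (v ((Polynomial.C c).eval (s n))).untopD 0
        rw [Polynomial.eval_C]
        rfl
      have h3 : lam (Polynomial.C c) = Stmt13.vR v c := tendsto_nhds_unique h1 h2
      rw [Wne hCc, RatFunc.num_C, RatFunc.denom_C, h3, hlam1, sub_zero, Stmt13.coe_vR v hc]
  · intro φ hφ
    refine ⟨lam φ.num - lam φ.denom, ?_, ?_⟩
    · rw [AddValuation.of_apply, Wne hφ]
    · refine Tendsto.congr' ?_
        (((hlam φ.num (RatFunc.num_ne_zero hφ)).2).sub
          ((hlam φ.denom (RatFunc.denom_ne_zero φ)).2))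
      filter_upwards [evalrepr hφ] with n h1
      rw [h1, WithTop.untopD_coe]
  · intro φ hmem
    rw [AddValuation.of_apply]
    by_cases hφ : φ = 0
    · rw [hφ, W0]; exact le_top
    · rw [Wne hφ]
      have hnonneg : ∀ᶠ n in atTop, (0 : ℝ) ≤
          (v (φ.num.eval (s n))).untopD 0 - (v (φ.denom.eval (s n))).untopD 0 := by
        filter_upwards [hmem, evalrepr hφ] with n h1 h2
        have h3 := h1.2
        rw [h2, ← WithTop.coe_zero, WithTop.coe_le_coe] at h3
        exact h3
      have hlim : (0 : ℝ) ≤ lam φ.num - lam φ.denom :=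
        le_of_tendsto_of_tendsto tendsto_const_nhds
          (((hlam φ.num (RatFunc.num_ne_zero hφ)).2).sub
            ((hlam φ.denom (RatFunc.denom_ne_zero φ)).2)) hnonneg
      rw [← WithTop.coe_zero, WithTop.coe_le_coe]
      exact hlim
end

section
/- Let (K, v) be a rank one valued field, E ⊂ K a pseudo-convergent sequence of algebraic type with finite breadth δ such that δ is torsion over Γ_v (i.e. kδ ∈ Γ_v for some k ≥ 1) and E has a pseudo-limit β ∈ K. Then V_E ≠ W_E; in particular there exists c ∈ K with v(c) = kδ such that (X-β)^k / c ∈ W_E \ V_E. -/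
open Filter

lemma nsmul_coe_real (m : ℕ) (a : ℝ) : m • (a : WithTop ℝ) = ((m * a : ℝ) : WithTop ℝ) := by
  induction m with
  | zero => simp
  | succ p ih =>
      rw [succ_nsmul, ih, ← WithTop.coe_add]
      norm_cast
      push_cast
      ring

/-- If E is of algebraic type with finite breadth δ torsion over Γ_v (kδ ∈ Γ_v,
k ≥ 1) and pseudo-limit β ∈ K, then V_E ≠ W_E: there is c ∈ K with v(c) = kδ and
(X - β)^k/c ∈ W_E \ V_E (membership in W_E stated as lim v(φ(s_n)) ≥ 0, i.e. for
every r < 0 eventually r < v(φ(s_n))). -/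
theorem stmt14 {K : Type*} [Field K] (v : AddValuation K (WithTop ℝ)) (s : ℕ → K)
    (δn : ℕ → ℝ) (δ : ℝ) (β : K) (k : ℕ) (hk : 1 ≤ k)
    (hgauge : ∀ n, v (s (n + 1) - s n) = (δn n : WithTop ℝ))
    (hmono : StrictMono δn) (hlim : Tendsto δn atTop (nhds δ))
    (halg : ∃ f : Polynomial K, ∃ N, ∀ n ≥ N, v (f.eval (s n)) < v (f.eval (s (n + 1))))
    (hβ : ∀ n, v (β - s n) < v (β - s (n + 1)))
    (htors : ∃ x : K, x ≠ 0 ∧ v x = ((k * δ : ℝ) : WithTop ℝ)) :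
    ∃ c : K, c ≠ 0 ∧ v c = ((k * δ : ℝ) : WithTop ℝ) ∧
      (∀ r : ℝ, r < 0 → ∀ᶠ n in atTop, (r : WithTop ℝ) <
        v (RatFunc.eval (RingHom.id K) (s n)
          ((RatFunc.X - RatFunc.C β) ^ k / RatFunc.C c))) ∧
      ¬ memVE v s ((RatFunc.X - RatFunc.C β) ^ k / RatFunc.C c) := by
  obtain ⟨c, hc0, hcv⟩ := htors
  -- φ as a polynomial
  have hC : (RatFunc.C c : RatFunc K) ≠ 0 := by simpa using hc0
  have hφ : (RatFunc.X - RatFunc.C β) ^ k / RatFunc.C c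
      = algebraMap (Polynomial K) (RatFunc K)
        ((Polynomial.X - Polynomial.C β) ^ k * Polynomial.C c⁻¹) := by
    rw [map_mul, map_pow, map_sub, RatFunc.algebraMap_X, RatFunc.algebraMap_C, RatFunc.algebraMap_C, map_inv₀, div_eq_mul_inv]
  -- value of β - s n
  have hval : ∀ n, v (β - s n) = (δn n : WithTop ℝ) := by
    intro n
    have h1 : s (n + 1) - s n = (β - s n) - (β - s (n + 1)) := by ring
    have := hgauge n
    rw [h1, AddValuation.map_sub_eq_of_lt_left v (hβ n)] at this
    exact this
  -- eval formula
  have heval : ∀ n, RatFunc.eval (RingHom.id K) (s n)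
      ((RatFunc.X - RatFunc.C β) ^ k / RatFunc.C c) = (s n - β) ^ k * c⁻¹ := by
    intro n
    rw [hφ, RatFunc.eval_algebraMap]
    simp [Polynomial.eval₂_mul, Polynomial.eval₂_pow]
  -- value of eval
  have hvv : ∀ n, v (RatFunc.eval (RingHom.id K) (s n)
      ((RatFunc.X - RatFunc.C β) ^ k / RatFunc.C c))
      = ((k * δn n - k * δ : ℝ) : WithTop ℝ) := by
    intro n
    rw [heval n, v.map_mul, v.map_pow, v.map_inv, hcv]
    have : v (s n - β) = (δn n : WithTop ℝ) := by
      rw [AddValuation.map_sub_swap, hval n]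
    rw [this]
    rw [sub_eq_add_neg, WithTop.coe_add, ← WithTop.LinearOrderedAddCommGroup.coe_neg]
    rw [nsmul_coe_real]
  have hkpos : (0 : ℝ) < k := by exact_mod_cast hk
  have hδlt : ∀ n, δn n < δ := fun n =>
    lt_of_lt_of_le (hmono (Nat.lt_succ_self n)) (hmono.monotone.ge_of_tendsto hlim (n + 1))
  refine ⟨c, hc0, hcv, ?_, ?_⟩
  · intro r hr
    have h1 : δ + r / k < δ := by
      have : r / k < 0 := div_neg_of_neg_of_pos hr hkpos
      linarith
    filter_upwards [hlim.eventually (eventually_gt_nhds h1)] with n hn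
    rw [hvv n, WithTop.coe_lt_coe]
    have h2 : (k : ℝ) * (δ + r / k) < k * δn n := by
      exact mul_lt_mul_of_pos_left hn hkpos
    have h3 : (k : ℝ) * (r / k) = r := by field_simp
    nlinarith
  · intro h
    obtain ⟨n, _, hn⟩ := h.exists
    rw [hvv n] at hn
    have h2 : (k : ℝ) * δn n - k * δ < 0 := by
      have := mul_lt_mul_of_pos_left (hδlt n) hkpos
      linarith
    have : ((k * δn n - k * δ : ℝ) : WithTop ℝ) < 0 := by exact_mod_cast h2
    exact absurd (lt_of_le_of_lt hn this) (lt_irrefl _)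
end

section
/- Let (K, v) be a rank one valued field and let E = {s_n} be a pseudo-convergent sequence of algebraic type with breadth δ ∈ ℝ such that V_E has rank 2 (equivalently δ is torsion over Γ_v). Then the map ν: K(X)* → ℝ² (lexicographically ordered) given by ν(φ) = (w_E(φ), −deg_dom_E(φ)) is a valuation on K(X), where w_E(φ) = lim v(φ(s_n)) and deg_dom_E(φ) is the dominating degree of φ with respect to E; its valuation ring equals V_E. -/
open Filter

namespace Aux15

/- WithTop ℝ helpers -/
lemma wt_nonneg_of_add_eq_zero {a b : WithTop ℝ} (h : a + b = 0) (ha : ¬ 0 ≤ a) : 0 ≤ b := by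
  induction b with
  | top => exact le_top
  | coe q =>
    induction a with
    | top => simp at h
    | coe r =>
      rw [← WithTop.coe_add, ← WithTop.coe_zero, WithTop.coe_inj] at h
      rw [← WithTop.coe_zero, WithTop.coe_le_coe] at ha ⊢
      push_neg at ha; linarith

lemma wt_add_le_add_iff (a c : WithTop ℝ) (b : ℝ) : a + (b : WithTop ℝ) ≤ c + b ↔ a ≤ c :=
  WithTop.add_le_add_iff_right (WithTop.coe_ne_top)

lemma wt_eq_sub_of_add {a : WithTop ℝ} {b c : ℝ} (h : (b : WithTop ℝ) = a + c) :
    a = ((b - c : ℝ) : WithTop ℝ) := by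
  induction a with
  | top => simp at h
  | coe r =>
    rw [← WithTop.coe_add, WithTop.coe_inj] at h
    rw [WithTop.coe_inj]; linarith

lemma lex_add (a b c d : ℝ) : toLex (a, b) + toLex (c, d) = toLex (a + c, b + d) := rfl

lemma lex_sub (a b c d : ℝ) : toLex (a, b) - toLex (c, d) = toLex (a - c, b - d) := rfl

lemma wt_nsmul (k : ℕ) (x : ℝ) : k • ((x : WithTop ℝ)) = ((k * x : ℝ) : WithTop ℝ) := by
  induction k with
  | zero => simp
  | succ k ih =>
    rw [succ_nsmul, ih, ← WithTop.coe_add, WithTop.coe_inj]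
    push_cast
    ring

variable {K : Type*} [Field K] (v : AddValuation K (WithTop ℝ))

/-- The valuation subring of an additive real-valued valuation. -/
def V0 : ValuationSubring K where
  carrier := {x | 0 ≤ v x}
  zero_mem' := by simp
  one_mem' := by simp
  add_mem' {a b} ha hb := le_trans (le_min ha hb) (v.map_add a b)
  mul_mem' {a b} ha hb := by
    simp only [Set.mem_setOf_eq, AddValuation.map_mul] at *
    exact add_nonneg ha hb
  neg_mem' {a} ha := by simpa only [Set.mem_setOf_eq, AddValuation.map_neg] using ha
  mem_or_inv_mem' x := by
    by_cases hx : 0 ≤ v x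
    · exact Or.inl hx
    · refine Or.inr (wt_nonneg_of_add_eq_zero ?_ hx)
      rcases eq_or_ne x 0 with rfl | h0
      · simp at hx
      · rw [← AddValuation.map_mul, mul_inv_cancel₀ h0, AddValuation.map_one]

lemma mem_V0 {x : K} : x ∈ V0 v ↔ 0 ≤ v x := Iff.rfl

variable {K : Type*} [Field K] (v : AddValuation K (WithTop ℝ))

lemma exists_W :
    ∃ W : ValuationSubring (AlgebraicClosure K),
      ∀ z : K, algebraMap K (AlgebraicClosure K) z ∈ W ↔ 0 ≤ v z := by
  obtain ⟨W, h, hloc⟩ :=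
    IsLocalRing.exists_factor_valuationRing
      ((algebraMap K (AlgebraicClosure K)).comp (V0 v).subtype)
  refine ⟨W, fun z => ⟨fun hz => ?_, fun hz => h ⟨z, (mem_V0 v).2 hz⟩⟩⟩
  by_contra hv
  have hz0 : z ≠ 0 := by rintro rfl; simp at hv
  have hzi : 0 ≤ v z⁻¹ := by
    refine wt_nonneg_of_add_eq_zero ?_ hv
    rw [← AddValuation.map_mul, mul_inv_cancel₀ hz0, AddValuation.map_one]
  set u : V0 v := ⟨z⁻¹, (mem_V0 v).2 hzi⟩ with hu_def
  have hu : IsUnit (((algebraMap K (AlgebraicClosure K)).comp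
      (V0 v).subtype).codRestrict W.toSubring h u) := by
    refine isUnit_iff_exists_inv.mpr ⟨⟨algebraMap K (AlgebraicClosure K) z, hz⟩, ?_⟩
    ext
    simp [u, ← map_mul, inv_mul_cancel₀ hz0]
    exact inv_mul_cancel₀ ((map_ne_zero _).2 hz0)
  obtain ⟨uu, huu⟩ := (hloc.map_nonunit u hu).exists_right_inv
  have huuz : (uu : K) = z := by
    have h2 := congrArg (Subtype.val) huu
    simp [u] at h2
    exact ((inv_mul_eq_one₀ hz0).1 h2).symm
  exact hv ((mem_V0 v).1 (huuz ▸ uu.2))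

variable {L : Type*} [Field L] [Algebra K L]

lemma wv_le_iff (W : ValuationSubring L)
    (hW : ∀ z : K, algebraMap K L z ∈ W ↔ 0 ≤ v z)
    {x y : K} (hx : x ≠ 0) (hy : y ≠ 0) :
    W.valuation (algebraMap K L x) ≤ W.valuation (algebraMap K L y) ↔ v y ≤ v x := by
  set ι := algebraMap K L with hι
  have hy' : W.valuation (ι y) ≠ 0 :=
    (Valuation.ne_zero_iff _).2 ((map_ne_zero ι).2 hy)
  have hxy : ι x = ι (x / y) * ι y := by rw [← map_mul, div_mul_cancel₀ _ hy]
  rw [hxy, Valuation.map_mul]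
  rw [show W.valuation (ι (x / y)) * W.valuation (ι y) ≤ W.valuation (ι y)
        ↔ W.valuation (ι (x / y)) * W.valuation (ι y) ≤ 1 * W.valuation (ι y) by rw [one_mul]]
  rw [mul_le_mul_iff_left₀ (zero_lt_iff.2 hy'), ValuationSubring.valuation_le_one_iff, hW]
  obtain ⟨b, hb⟩ : ∃ b : ℝ, v y = (b : WithTop ℝ) :=
    Option.ne_none_iff_exists'.mp ((AddValuation.ne_top_iff v).2 hy)
  have hvx : v x = v (x / y) + v y := by
    rw [← AddValuation.map_mul, div_mul_cancel₀ _ hy]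
  constructor
  · intro h
    rw [hvx, hb]
    calc (b : WithTop ℝ) = 0 + (b : WithTop ℝ) := by rw [zero_add]
    _ ≤ v (x / y) + b := by
        exact add_le_add_left h _
  · intro h
    have : (0 : WithTop ℝ) + (b : WithTop ℝ) ≤ v (x / y) + (b : WithTop ℝ) := by
      rw [zero_add, ← hb, ← hvx]; exact h
    exact (wt_add_le_add_iff _ _ _).1 this

lemma wv_eq_iff (W : ValuationSubring L)
    (hW : ∀ z : K, algebraMap K L z ∈ W ↔ 0 ≤ v z)
    {x y : K} (hx : x ≠ 0) (hy : y ≠ 0) :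
    W.valuation (algebraMap K L x) = W.valuation (algebraMap K L y) ↔ v y = v x := by
  constructor
  · intro h
    exact le_antisymm ((wv_le_iff v W hW hx hy).1 h.le) ((wv_le_iff v W hW hy hx).1 h.ge)
  · intro h
    exact le_antisymm ((wv_le_iff v W hW hx hy).2 h.le) ((wv_le_iff v W hW hy hx).2 h.ge)

variable (s : ℕ → K) (δn : ℕ → ℝ)

lemma key (hgauge : ∀ n, v (s (n + 1) - s n) = (δn n : WithTop ℝ)) (hmono : StrictMono δn)
    (f : Polynomial K) (hf : f ≠ 0) :
    ∃ (lam : ℕ) (γ : ℝ), ∀ᶠ n in atTop,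
      v (f.eval (s n)) = ((lam * δn n + γ : ℝ) : WithTop ℝ) := by
  classical
  obtain ⟨W, hW⟩ := exists_W (K := K) v
  set L := AlgebraicClosure K with hL
  set ι := algebraMap K L with hιdef
  set wv := W.valuation with hwv
  -- basic facts
  have hsne : ∀ n, s (n + 1) - s n ≠ 0 := by
    intro n h
    have := hgauge n
    rw [h, AddValuation.map_zero] at this
    exact (WithTop.coe_ne_top (a := δn n)) this.symm
  have hpc : ∀ m n, n < m → v (s m - s n) = (δn n : WithTop ℝ) := by
    intro m
    induction m with
    | zero => omega
    | succ m ih =>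
      intro n hn
      rcases eq_or_lt_of_le (Nat.lt_succ_iff.mp hn) with h | h
      · exact h ▸ hgauge n
      · have hsum : s (m + 1) - s n = (s (m + 1) - s m) + (s m - s n) := by ring
        rw [hsum, AddValuation.map_add_of_distinct_val, hgauge, ih n h]
        · rw [min_eq_right (WithTop.coe_le_coe.2 (hmono h).le)]
        · rw [hgauge, ih n h]
          exact fun hc => (hmono h).ne' (WithTop.coe_inj.1 hc)
  have hpcne : ∀ m n, n < m → s m - s n ≠ 0 := by
    intro m n h hc
    have := hpc m n h
    rw [hc, AddValuation.map_zero] at this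
    exact (WithTop.coe_ne_top (a := δn n)) this.symm
  set g : ℕ → W.ValueGroup := fun n => wv (ι (s (n + 1) - s n)) with hg
  have hg0 : ∀ n, g n ≠ 0 := fun n =>
    (Valuation.ne_zero_iff _).2 ((map_ne_zero ι).2 (hsne n))
  have hganti : ∀ {n m : ℕ}, n < m → g m < g n := by
    intro n m h
    rw [lt_iff_not_ge, wv_le_iff v W hW (hsne n) (hsne m), hgauge, hgauge,
      WithTop.coe_le_coe, not_le]
    exact hmono h
  have hgantile : ∀ {n m : ℕ}, n ≤ m → g m ≤ g n := by
    intro n m h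
    rcases eq_or_lt_of_le h with rfl | h
    · exact le_rfl
    · exact (hganti h).le
  have hdiffval : ∀ m n, n < m → wv (ι (s m) - ι (s n)) = g n := by
    intro m n h
    rw [← map_sub ι]
    exact (wv_eq_iff v W hW (hpcne m n h) (hsne n)).2 (by rw [hgauge, hpc m n h])
  -- trichotomy
  have htri : ∀ α : L, ∃ (lam : ℕ) (c : W.ValueGroup), c ≠ 0 ∧ ∃ N, ∀ n, N ≤ n →
      wv (ι (s n) - α) = c * g n ^ lam := by
    intro α
    by_cases hα : ∃ m, α = ι (s m)
    · obtain ⟨m, rfl⟩ := hα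
      refine ⟨0, g m, hg0 m, m + 1, fun n hn => ?_⟩
      rw [pow_zero, mul_one, hdiffval n m (by omega)]
    · push_neg at hα
      have ha0 : ∀ n, wv (ι (s n) - α) ≠ 0 := fun n =>
        (Valuation.ne_zero_iff _).2 (sub_ne_zero.2 (fun h => hα n h.symm))
      by_cases hcs : ∃ N, g N < wv (ι (s N) - α)
      · obtain ⟨N, hNc⟩ := hcs
        refine ⟨0, wv (ι (s N) - α), ha0 N, N, fun n hn => ?_⟩
        rw [pow_zero, mul_one]
        induction n, hn using Nat.le_induction with
        | base => rfl
        | succ n hn ih =>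
          have hlt : wv (ι (s (n + 1)) - ι (s n)) < wv (ι (s n) - α) := by
            rw [hdiffval (n + 1) n (by omega), ih]
            exact lt_of_le_of_lt (hgantile hn) hNc
          have hre : ι (s (n + 1)) - α = (ι (s n) - α) + (ι (s (n + 1)) - ι (s n)) := by
            ring
          rw [hre, Valuation.map_add_eq_of_lt_left _ hlt]
          exact ih
      · push_neg at hcs
        refine ⟨1, 1, one_ne_zero, 0, fun n _ => ?_⟩
        rw [pow_one, one_mul]
        rcases lt_or_eq_of_le (hcs n) with h | h
        · exfalso
          have hre : ι (s (n + 1)) - α = (ι (s (n + 1)) - ι (s n)) + (ι (s n) - α) := by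
            ring
          have h2 : wv (ι (s (n + 1)) - α) = g n := by
            rw [hre, Valuation.map_add_eq_of_lt_left]
            · exact hdiffval (n + 1) n (by omega)
            · rw [hdiffval (n + 1) n (by omega)]; exact h
          have h3 := hcs (n + 1)
          rw [h2] at h3
          exact absurd h3 (not_le.2 (hganti (Nat.lt_succ_self n)))
        · exact h
  -- product over roots
  have hprod : ∀ M : Multiset L, ∃ (lam : ℕ) (c : W.ValueGroup), c ≠ 0 ∧ ∃ N, ∀ n, N ≤ n →
      (M.map (fun α => wv (ι (s n) - α))).prod = c * g n ^ lam := by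
    intro M
    induction M using Multiset.induction with
    | empty => exact ⟨0, 1, one_ne_zero, 0, fun n _ => by simp⟩
    | cons a M ih =>
      obtain ⟨lam1, c1, hc1, N1, h1⟩ := htri a
      obtain ⟨lam2, c2, hc2, N2, h2⟩ := ih
      refine ⟨lam1 + lam2, c1 * c2, mul_ne_zero hc1 hc2, max N1 N2, fun n hn => ?_⟩
      rw [Multiset.map_cons, Multiset.prod_cons, h1 n (le_trans (le_max_left _ _) hn),
        h2 n (le_trans (le_max_right _ _) hn), pow_add]
      exact mul_mul_mul_comm _ _ _ _
  -- eval formula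
  obtain ⟨lam, c, hc, N, hN⟩ := hprod (f.map ι).roots
  have hfι : f.map ι ≠ 0 := (Polynomial.map_ne_zero_iff (algebraMap K L).injective).2 hf
  set lc := (f.map ι).leadingCoeff with hlc
  have hlc0 : lc ≠ 0 := Polynomial.leadingCoeff_ne_zero.2 hfι
  have heval : ∀ n, ι (f.eval (s n)) =
      lc * ((f.map ι).roots.map (fun α => ι (s n) - α)).prod := by
    intro n
    have h1 : ι (f.eval (s n)) = (f.map ι).eval (ι (s n)) := by
      rw [Polynomial.eval_map, Polynomial.eval₂_at_apply]
    rw [h1]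
    conv_lhs => rw [Polynomial.Splits.eq_prod_roots
      (IsAlgClosed.splits (f.map ι))]
    rw [Polynomial.eval_mul, Polynomial.eval_C, Polynomial.eval_multiset_prod,
      Multiset.map_map]
    have hmc : Multiset.map (Polynomial.eval (ι (s n)) ∘ fun a => Polynomial.X - Polynomial.C a)
          (f.map ι).roots
        = Multiset.map (fun α => ι (s n) - α) (f.map ι).roots :=
      Multiset.map_congr rfl fun a ha => by simp
    rw [hmc]
  set C : W.ValueGroup := wv lc * c with hC
  have hC0 : C ≠ 0 := mul_ne_zero ((Valuation.ne_zero_iff _).2 hlc0) hc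
  have hval : ∀ n, N ≤ n → wv (ι (f.eval (s n))) = C * g n ^ lam := by
    intro n hn
    rw [heval n, Valuation.map_mul, map_multiset_prod (wv : Valuation L W.ValueGroup) _,
      Multiset.map_map]
    have : (Multiset.map ((wv : L → W.ValueGroup) ∘ fun α => ι (s n) - α)
        (f.map ι).roots).prod = c * g n ^ lam := hN n hn
    rw [this, hC, mul_assoc]
  have hev0 : ∀ n, N ≤ n → f.eval (s n) ≠ 0 := by
    intro n hn hz
    have := hval n hn
    rw [hz, map_zero, Valuation.map_zero] at this
    exact (mul_ne_zero hC0 (pow_ne_zero _ (hg0 n))) this.symm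
  -- transfer back to v
  have hveq : ∀ n, N ≤ n →
      v (f.eval (s n) * (s (N + 1) - s N) ^ lam) =
      v (f.eval (s N) * (s (n + 1) - s n) ^ lam) := by
    intro n hn
    refine (wv_eq_iff v W hW
      (mul_ne_zero (hev0 N le_rfl) (pow_ne_zero _ (hsne n)))
      (mul_ne_zero (hev0 n hn) (pow_ne_zero _ (hsne N)))).1 ?_
    rw [map_mul ι, map_mul ι, map_pow ι, map_pow ι, Valuation.map_mul, Valuation.map_mul,
      Valuation.map_pow, Valuation.map_pow]
    show wv (ι (f.eval (s N))) * (g n) ^ lam = wv (ι (f.eval (s n))) * (g N) ^ lam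
    rw [hval n hn, hval N le_rfl, mul_right_comm]
  obtain ⟨rN, hrN⟩ : ∃ r : ℝ, v (f.eval (s N)) = (r : WithTop ℝ) :=
    Option.ne_none_iff_exists'.mp ((AddValuation.ne_top_iff v).2 (hev0 N le_rfl))
  refine ⟨lam, rN - lam * δn N, eventually_atTop.2 ⟨N, fun n hn => ?_⟩⟩
  have h1 := hveq n hn
  rw [AddValuation.map_mul, AddValuation.map_mul, AddValuation.map_pow, AddValuation.map_pow,
    hgauge, hgauge, hrN] at h1
  rw [wt_nsmul, wt_nsmul, ← WithTop.coe_add] at h1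
  have := wt_eq_sub_of_add (a := v (f.eval (s n))) (b := rN + lam * δn n)
    (c := lam * δn N) h1.symm
  rw [this, WithTop.coe_inj]
  ring

variable (δ : ℝ)

lemma dlt (hmono : StrictMono δn) (hlim : Tendsto δn atTop (nhds δ)) (n : ℕ) : δn n < δ :=
  lt_of_lt_of_le (hmono (Nat.lt_succ_self n)) (hmono.monotone.ge_of_tendsto hlim (n + 1))

lemma germ_unique (hmono : StrictMono δn) {a b a' b' : ℝ}
    (h : ∀ᶠ n in atTop, a * δn n + b = a' * δn n + b') : a = a' ∧ b = b' := by
  obtain ⟨N, hN⟩ := eventually_atTop.1 h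
  have h1 := hN N le_rfl
  have h2 := hN (N + 1) (Nat.le_succ N)
  have hδ : δn N ≠ δn (N + 1) := (hmono (Nat.lt_succ_self N)).ne
  have ha : a = a' := by
    by_contra hne
    apply hδ
    have e1 : (a - a') * δn N = b' - b := by linarith
    have e2 : (a - a') * δn (N + 1) = b' - b := by linarith
    exact mul_left_cancel₀ (sub_ne_zero.2 hne) (e1.trans e2.symm)
  refine ⟨ha, ?_⟩
  rw [ha] at h1
  linarith

lemma germ_le_iff (hmono : StrictMono δn) (hlim : Tendsto δn atTop (nhds δ)) {a b a' b' : ℝ} :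
    (∀ᶠ n in atTop, a * δn n + b ≤ a' * δn n + b') ↔
      toLex (a * δ + b, -a) ≤ toLex (a' * δ + b', -a') := by
  have tends : ∀ p q : ℝ, Tendsto (fun n => p * δn n + q) atTop (nhds (p * δ + q)) :=
    fun p q => (hlim.const_mul p).add_const q
  constructor
  · intro h
    have hle : a * δ + b ≤ a' * δ + b' :=
      le_of_tendsto_of_tendsto (tends a b) (tends a' b') h
    rcases lt_or_eq_of_le hle with hlt | heq
    · exact Prod.Lex.le_iff.2 (Or.inl hlt)
    · obtain ⟨N, hN⟩ := eventually_atTop.1 h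
      have h1 := hN N le_rfl
      have hd := dlt δn δ hmono hlim N
      have ha : a' ≤ a := by
        by_contra hc
        push_neg at hc
        nlinarith [mul_pos (sub_pos.2 hc) (sub_pos.2 hd)]
      exact Prod.Lex.le_iff.2 (Or.inr ⟨heq, neg_le_neg ha⟩)
  · intro h
    rcases Prod.Lex.le_iff.1 h with hlt | ⟨heq, hle⟩
    · exact ((tends a b).eventually_lt (tends a' b') hlt).mono fun n hn => hn.le
    · refine Eventually.of_forall fun n => ?_
      change a * δ + b = a' * δ + b' at heq
      have hd := dlt δn δ hmono hlim n
      have ha : a' ≤ a := by simpa using hle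
      nlinarith [mul_nonneg (sub_nonneg.2 ha) (sub_nonneg.2 hd.le)]

lemma germ_nonneg (hmono : StrictMono δn) (hlim : Tendsto δn atTop (nhds δ)) {a b : ℝ} :
    (∀ᶠ n in atTop, 0 ≤ a * δn n + b) ↔ (0 : ℝ ×ₗ ℝ) ≤ toLex (a * δ + b, -a) := by
  have h := germ_le_iff δn δ hmono hlim (a := 0) (b := 0) (a' := a) (b' := b)
  simpa [show (toLex ((0 : ℝ), (0 : ℝ)) : ℝ ×ₗ ℝ) = 0 from rfl] using h

lemma ratfunc_eval (φ : RatFunc K) (x : K) :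
    RatFunc.eval (RingHom.id K) x φ = φ.num.eval x / φ.denom.eval x := rfl

end Aux15


/-- If E is of algebraic type with finite breadth δ torsion over Γ_v (so V_E has
rank 2), then ν(φ) = (w_E(φ), -deg_dom(φ)) ∈ ℝ² (lexicographic) defines a
valuation on K(X) whose valuation ring is V_E. The dominating degree of φ is
characterized as the integer λ with v(φ(s_n)) = λδ_n + γ eventually, in which
case w_E(φ) = λδ + γ. -/
theorem stmt15 {K : Type*} [Field K] (v : AddValuation K (WithTop ℝ)) (s : ℕ → K)
    (δn : ℕ → ℝ) (δ : ℝ)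
    (hgauge : ∀ n, v (s (n + 1) - s n) = (δn n : WithTop ℝ))
    (hmono : StrictMono δn) (hlim : Tendsto δn atTop (nhds δ))
    (halg : ∃ f : Polynomial K, ∃ N, ∀ n ≥ N, v (f.eval (s n)) < v (f.eval (s (n + 1))))
    (hbr : ∃ b : K, b ≠ 0 ∧ ∀ n, (δn n : WithTop ℝ) < v b)
    (htors : ∃ k : ℕ, 1 ≤ k ∧ ∃ x : K, x ≠ 0 ∧ v x = ((k * δ : ℝ) : WithTop ℝ)) :
    ∃ ν : AddValuation (RatFunc K) (WithTop (ℝ ×ₗ ℝ)),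
      (∀ φ : RatFunc K, φ ≠ 0 → ∀ lam : ℤ, ∀ γ : ℝ,
        (∀ᶠ n in atTop, v (RatFunc.eval (RingHom.id K) (s n) φ) =
          (((lam : ℝ) * δn n + γ : ℝ) : WithTop ℝ)) →
        ν φ = (↑(toLex ((lam : ℝ) * δ + γ, (-lam : ℝ))) : WithTop (ℝ ×ₗ ℝ))) ∧
      (∀ φ : RatFunc K, 0 ≤ ν φ ↔ memVE v s φ) := by
  classical
  have key' : ∀ f : Polynomial K, ∃ lamγ : ℝ × ℝ, f ≠ 0 →
      ∀ᶠ n in atTop, v (f.eval (s n)) = ((lamγ.1 * δn n + lamγ.2 : ℝ) : WithTop ℝ) := by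
    intro f
    by_cases hf : f = 0
    · exact ⟨(0, 0), fun h => absurd hf h⟩
    · obtain ⟨lam, γ, h⟩ := Aux15.key v s δn hgauge hmono f hf
      exact ⟨((lam : ℝ), γ), fun _ => h⟩
  choose lg hkey using key'
  set lam : Polynomial K → ℝ := fun f => (lg f).1 with hlam
  set gam : Polynomial K → ℝ := fun f => (lg f).2 with hgam
  set P : Polynomial K → ℝ ×ₗ ℝ := fun f => toLex (lam f * δ + gam f, -(lam f)) with hP
  -- uniqueness of germ representation
  have hgermP : ∀ f : Polynomial K, f ≠ 0 → ∀ a b : ℝ,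
      (∀ᶠ n in atTop, v (f.eval (s n)) = ((a * δn n + b : ℝ) : WithTop ℝ)) →
      lam f = a ∧ gam f = b := by
    intro f hf a b h
    refine Aux15.germ_unique δn hmono (((hkey f hf).and h).mono fun n ⟨e1, e2⟩ => ?_)
    exact WithTop.coe_inj.1 (e1.symm.trans e2)
  have hPmul : ∀ f g : Polynomial K, f ≠ 0 → g ≠ 0 → P (f * g) = P f + P g := by
    intro f g hf hg
    have hrep : ∀ᶠ n in atTop, v ((f * g).eval (s n)) =
        (((lam f + lam g) * δn n + (gam f + gam g) : ℝ) : WithTop ℝ) :=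
      ((hkey f hf).and (hkey g hg)).mono fun n ⟨e1, e2⟩ => by
        rw [Polynomial.eval_mul, AddValuation.map_mul, e1, e2, ← WithTop.coe_add,
          WithTop.coe_inj]
        ring
    obtain ⟨ha, hb⟩ := hgermP (f * g) (mul_ne_zero hf hg) _ _ hrep
    show toLex (lam (f * g) * δ + gam (f * g), -lam (f * g)) =
      toLex (lam f * δ + gam f, -lam f) + toLex (lam g * δ + gam g, -lam g)
    rw [ha, hb, Aux15.lex_add]
    exact congrArg toLex (Prod.ext (by ring) (by ring))
  have hPadd : ∀ f g : Polynomial K, f ≠ 0 → g ≠ 0 → f + g ≠ 0 →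
      min (P f) (P g) ≤ P (f + g) := by
    intro f g hf hg hfg
    have main : ∀ f' g' : Polynomial K, f' ≠ 0 → g' ≠ 0 → f' + g' ≠ 0 → P f' ≤ P g' →
        P f' ≤ P (f' + g') := by
      intro f' g' hf' hg' hfg' hle
      have hev : ∀ᶠ n in atTop, lam f' * δn n + gam f' ≤ lam g' * δn n + gam g' :=
        (Aux15.germ_le_iff δn δ hmono hlim).2 hle
      refine (Aux15.germ_le_iff δn δ hmono hlim).1 ?_
      refine ((((hkey f' hf').and (hkey g' hg')).and (hkey (f' + g') hfg')).and hev).mono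
        fun n ⟨⟨⟨e1, e2⟩, e3⟩, e4⟩ => ?_
      have h5 := v.map_add (f'.eval (s n)) (g'.eval (s n))
      rw [e1, e2, ← Polynomial.eval_add, e3, ← WithTop.coe_min] at h5
      have h6 := WithTop.coe_le_coe.1 h5
      rw [min_eq_left e4] at h6
      exact h6
    rcases le_total (P f) (P g) with hle | hle
    · rw [min_eq_left hle]
      exact main f g hf hg hfg hle
    · rw [min_eq_right hle]
      rw [add_comm] at hfg ⊢
      exact main g f hg hf hfg hle
  set Q : RatFunc K → WithTop (ℝ ×ₗ ℝ) :=
    fun φ => if φ = 0 then ⊤ else ((P φ.num - P φ.denom : ℝ ×ₗ ℝ) : WithTop (ℝ ×ₗ ℝ)) with hQ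
  have hQ0 : Q 0 = ⊤ := if_pos rfl
  have hQne : ∀ φ : RatFunc K, φ ≠ 0 →
      Q φ = ((P φ.num - P φ.denom : ℝ ×ₗ ℝ) : WithTop (ℝ ×ₗ ℝ)) := fun φ h => if_neg h
  have hQrep : ∀ (φ : RatFunc K) (fp gp : Polynomial K), φ ≠ 0 → fp ≠ 0 → gp ≠ 0 →
      φ.num * gp = fp * φ.denom →
      Q φ = ((P fp - P gp : ℝ ×ₗ ℝ) : WithTop (ℝ ×ₗ ℝ)) := by
    intro φ fp gp hφ hf hg hrel
    have h1 : P φ.num + P gp = P fp + P φ.denom := by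
      rw [← hPmul _ _ (RatFunc.num_ne_zero hφ) hg, ← hPmul _ _ hf φ.denom_ne_zero, hrel]
    rw [hQne φ hφ]
    exact congrArg _ (sub_eq_sub_iff_add_eq_add.2 h1)
  -- the valuation axioms
  have hQone : Q 1 = 0 := by
    rw [hQne 1 one_ne_zero, RatFunc.num_one, RatFunc.denom_one, sub_self]
    rfl
  have hQmul : ∀ x y : RatFunc K, Q (x * y) = Q x + Q y := by
    intro x y
    rcases eq_or_ne x 0 with rfl | hx
    · rw [zero_mul, hQ0, top_add]
    rcases eq_or_ne y 0 with rfl | hy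
    · rw [mul_zero, hQ0, add_top]
    have hxy : x * y ≠ 0 := mul_ne_zero hx hy
    rw [hQrep (x * y) (x.num * y.num) (x.denom * y.denom) hxy
        (mul_ne_zero (RatFunc.num_ne_zero hx) (RatFunc.num_ne_zero hy))
        (mul_ne_zero x.denom_ne_zero y.denom_ne_zero) (RatFunc.num_denom_mul x y),
      hQne x hx, hQne y hy, ← WithTop.coe_add]
    rw [hPmul _ _ (RatFunc.num_ne_zero hx) (RatFunc.num_ne_zero hy),
      hPmul _ _ x.denom_ne_zero y.denom_ne_zero]
    congr 1
    abel
  have hQadd : ∀ x y : RatFunc K, min (Q x) (Q y) ≤ Q (x + y) := by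
    intro x y
    rcases eq_or_ne (x + y) 0 with h0 | h0
    · have ht : Q (x + y) = ⊤ := if_pos h0
      rw [ht]
      exact le_top
    rcases eq_or_ne x 0 with rfl | hx
    · rw [zero_add, hQ0]
      exact min_le_right _ _
    rcases eq_or_ne y 0 with rfl | hy
    · rw [add_zero, hQ0]
      exact min_le_left _ _
    have hBne : x.denom * y.denom ≠ 0 := mul_ne_zero x.denom_ne_zero y.denom_ne_zero
    have hf1 : x.num * y.denom ≠ 0 := mul_ne_zero (RatFunc.num_ne_zero hx) y.denom_ne_zero
    have hf2 : x.denom * y.num ≠ 0 := mul_ne_zero x.denom_ne_zero (RatFunc.num_ne_zero hy)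
    have hrel := RatFunc.num_denom_add x y
    have hA : x.num * y.denom + x.denom * y.num ≠ 0 := by
      intro hA0
      rw [hA0, zero_mul] at hrel
      exact RatFunc.num_ne_zero h0 ((mul_eq_zero.1 hrel).resolve_right hBne)
    rw [hQrep (x + y) (x.num * y.denom + x.denom * y.num) (x.denom * y.denom) h0 hA hBne hrel,
      hQrep x (x.num * y.denom) (x.denom * y.denom) hx hf1 hBne (by ring),
      hQrep y (x.denom * y.num) (x.denom * y.denom) hy hf2 hBne (by ring),
      ← WithTop.coe_min]
    rw [WithTop.coe_le_coe, min_sub_sub_right]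
    exact sub_le_sub_right (hPadd _ _ hf1 hf2 hA) _
  refine ⟨AddValuation.of Q hQ0 hQone hQadd hQmul, ?_, ?_⟩
  · -- first conclusion
    intro φ hφ lamz γz hev
    rw [AddValuation.of_apply]
    have hnum := hkey φ.num (RatFunc.num_ne_zero hφ)
    have hden := hkey φ.denom φ.denom_ne_zero
    have hdnz : ∀ᶠ n in atTop, (φ.denom.eval (s n)) ≠ 0 := by
      refine hden.mono fun n e h0 => ?_
      rw [h0, AddValuation.map_zero] at e
      exact WithTop.top_ne_coe e
    have hgerm : ∀ᶠ n in atTop,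
        lam φ.num * δn n + gam φ.num =
          ((lamz : ℝ) * δn n + γz) + (lam φ.denom * δn n + gam φ.denom) := by
      refine (((hnum.and hden).and hdnz).and hev).mono fun n ⟨⟨⟨e1, e2⟩, e3⟩, e4⟩ => ?_
      have hsp : φ.num.eval (s n) = RatFunc.eval (RingHom.id K) (s n) φ * φ.denom.eval (s n) := by
        rw [Aux15.ratfunc_eval, div_mul_cancel₀ _ e3]
      have := congrArg v hsp
      rw [e1, AddValuation.map_mul, e2, e4, ← WithTop.coe_add] at this
      exact WithTop.coe_inj.1 this
    have huni : lam φ.num = (lamz : ℝ) + lam φ.denom ∧ gam φ.num = γz + gam φ.denom := by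
      refine hgermP φ.num (RatFunc.num_ne_zero hφ) _ _
        ((hnum.and hgerm).mono fun n ⟨e1, e2⟩ => ?_)
      rw [e1, WithTop.coe_inj, e2]
      ring
    rw [hQne φ hφ, WithTop.coe_inj]
    show toLex (lam φ.num * δ + gam φ.num, -lam φ.num) -
        toLex (lam φ.denom * δ + gam φ.denom, -lam φ.denom) = _
    rw [Aux15.lex_sub, huni.1, huni.2]
    exact congrArg toLex (Prod.ext (by ring) (by push_cast; ring))
  · -- second conclusion
    intro φ
    rw [AddValuation.of_apply]
    rcases eq_or_ne φ 0 with rfl | hφ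
    · rw [hQ0]
      constructor
      · intro _
        refine Eventually.of_forall fun n => ⟨?_, ?_⟩
        · rw [RatFunc.denom_zero, Polynomial.eval_one]
          exact one_ne_zero
        · rw [RatFunc.eval_zero, AddValuation.map_zero]
          exact le_top
      · intro _
        exact le_top
    · have hnum := hkey φ.num (RatFunc.num_ne_zero hφ)
      have hden := hkey φ.denom φ.denom_ne_zero
      have hdnz : ∀ᶠ n in atTop, (φ.denom.eval (s n)) ≠ 0 := by
        refine hden.mono fun n e h0 => ?_
        rw [h0, AddValuation.map_zero] at e
        exact WithTop.top_ne_coe e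
      have hveval : ∀ᶠ n in atTop, v (RatFunc.eval (RingHom.id K) (s n) φ) =
          (((lam φ.num - lam φ.denom) * δn n + (gam φ.num - gam φ.denom) : ℝ) : WithTop ℝ) := by
        refine ((hnum.and hden).and hdnz).mono fun n ⟨⟨e1, e2⟩, e3⟩ => ?_
        have hsp : φ.num.eval (s n) = RatFunc.eval (RingHom.id K) (s n) φ * φ.denom.eval (s n) := by
          rw [Aux15.ratfunc_eval, div_mul_cancel₀ _ e3]
        have h4 := congrArg v hsp
        rw [e1, AddValuation.map_mul, e2] at h4
        rw [Aux15.wt_eq_sub_of_add h4, WithTop.coe_inj]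
        ring
      have hQφ : Q φ = ((toLex ((lam φ.num - lam φ.denom) * δ + (gam φ.num - gam φ.denom),
          -(lam φ.num - lam φ.denom)) : ℝ ×ₗ ℝ) : WithTop (ℝ ×ₗ ℝ)) := by
        rw [hQne φ hφ, WithTop.coe_inj]
        show toLex (lam φ.num * δ + gam φ.num, -lam φ.num) -
            toLex (lam φ.denom * δ + gam φ.denom, -lam φ.denom) = _
        rw [Aux15.lex_sub]
        exact congrArg toLex (Prod.ext (by ring) (by ring))
      rw [hQφ]
      unfold memVE
      constructor
      · intro hge
        have h0 : (0 : ℝ ×ₗ ℝ) ≤ toLex ((lam φ.num - lam φ.denom) * δ +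
            (gam φ.num - gam φ.denom), -(lam φ.num - lam φ.denom)) := by
          rwa [← WithTop.coe_zero, WithTop.coe_le_coe] at hge
        have hev1 := (Aux15.germ_nonneg δn δ hmono hlim).2 h0
        refine (hdnz.and (hev1.and hveval)).mono fun n ⟨e3, e5, e4⟩ => ⟨e3, ?_⟩
        rw [e4, ← WithTop.coe_zero, WithTop.coe_le_coe]
        exact e5
      · intro hmem
        have hev2 : ∀ᶠ n in atTop,
            0 ≤ (lam φ.num - lam φ.denom) * δn n + (gam φ.num - gam φ.denom) := by
          refine (hmem.and hveval).mono fun n ⟨⟨_, h6⟩, e4⟩ => ?_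
          rw [e4, ← WithTop.coe_zero, WithTop.coe_le_coe] at h6
          exact h6
        have h0 := (Aux15.germ_nonneg δn δ hmono hlim).1 hev2
        rw [← WithTop.coe_zero, WithTop.coe_le_coe]
        exact h0
end
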